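/- If v is a canonical word over Fin n and v ~ w, then v is a sublist (quasi-subword, List.Sublist) of w. -/

import Mathlib

variable {n : ℕ}

/-- Generating relation of the Kiselman congruence on words over `Fin n`. -/
inductive KisStep : List (Fin n) → List (Fin n) → Prop
  | idem : ∀ (u v : List (Fin n)) (i : Fin n),
      KisStep (u ++ [i, i] ++ v) (u ++ [i] ++ v)
  | left : ∀ (u v : List (Fin n)) (i j : Fin n), i < j →
      KisStep (u ++ [i, j, i] ++ v) (u ++ [i, j] ++ v)
  | right : ∀ (u v : List (Fin n)) (i j : Fin n), i < j →
      KisStep (u ++ [j, i, j] ++ v) (u ++ [i, j] ++ v)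

/-- The Kiselman congruence: smallest equivalence relation containing `KisStep`. -/
def KisEquiv (x y : List (Fin n)) : Prop := Relation.EqvGen KisStep x y

/-- An infix `[i] ++ u ++ [i]` is special if `u` contains a letter `> i` and a letter `< i`. -/
def Special (i : Fin n) (u : List (Fin n)) : Prop :=
  (∃ j ∈ u, i < j) ∧ (∃ j ∈ u, j < i)

/-- A word is canonical if all its infixes of the form `[i] ++ u ++ [i]` are special. -/
def Canonical (w : List (Fin n)) : Prop :=
  ∀ (i : Fin n) (u : List (Fin n)), ([i] ++ u ++ [i]) <:+: w → Special i u

/-- Delete all letters strictly smaller than `k`. -/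
def filterGE (k : Fin n) (w : List (Fin n)) : List (Fin n) :=
  w.filter (fun a => decide (k ≤ a))

/-- `trunc i w` is the longest suffix of `w` with head `i`, or `[]` if `i ∉ w`. -/
def trunc (i : Fin n) : List (Fin n) → List (Fin n)
  | [] => []
  | a :: t => if a = i then a :: t else trunc i t

/-- Longest suffix of `w` whose head is `< k` (as a natural number), or `[]`. -/
def truncLtN (k : ℕ) : List (Fin n) → List (Fin n)
  | [] => []
  | a :: t => if (a : ℕ) < k then a :: t else truncLtN k t

/-- `join u v = u⁺ ++ v`, where `u⁻` is the longest suffix of `u` that is a sublist of `v`. -/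
def join : List (Fin n) → List (Fin n) → List (Fin n)
  | [], v => v
  | a :: t, v => if (a :: t).Sublist v then v else a :: join t v

/-- The local update function at vertex `i` of the update system `S_n^⋆`. -/
def Fstep (i : Fin n) (s : Fin n → List (Fin n)) : Fin n → List (Fin n) :=
  Function.update s i
    (i :: List.foldr join []
      ((((List.finRange n).filter (fun j => decide (i < j))).reverse).map s))

/-- The evolution induced by a word (rightmost letter acts first). -/
def Fword (w : List (Fin n)) (s : Fin n → List (Fin n)) : Fin n → List (Fin n) :=
  w.foldr Fstep s

/-- The initial system state `⋆`. -/
def starState : Fin n → List (Fin n) := fun _ => []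

/-! ### Auxiliary single-deletion rewriting system -/

/-- Position `d` of `a` is deletable: there is a matching pair `a[p] = a[q] = j`, `p < q`,
with everything strictly between either all `> j` (then `d = q`) or all `< j` (then `d = p`). -/
def Red (a : List (Fin n)) (d : ℕ) : Prop :=
  ∃ (p q : ℕ) (j : Fin n), p < q ∧ a[p]? = some j ∧ a[q]? = some j ∧
    (((∀ r (x : Fin n), p < r → r < q → a[r]? = some x → j < x) ∧ d = q) ∨
     ((∀ r (x : Fin n), p < r → r < q → a[r]? = some x → x < j) ∧ d = p))

/-- One deletion step. -/
def Del (a b : List (Fin n)) : Prop := ∃ d, Red a d ∧ b = a.eraseIdx d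

/-- shift of an index after erasing at `d1`. -/
def sh (d1 m : ℕ) : ℕ := if m < d1 then m else m - 1

lemma getElem?_erase_sh (a : List (Fin n)) {d1 m : ℕ} (h : m ≠ d1) :
    (a.eraseIdx d1)[sh d1 m]? = a[m]? := by
  rcases lt_or_gt_of_ne h with h' | h'
  · rw [sh, if_pos h', List.getElem?_eraseIdx, if_pos h']
  · rw [sh, if_neg (by omega), List.getElem?_eraseIdx, if_neg (by omega)]
    congr 1
    omega

lemma sh_lt {d1 P Q : ℕ} (hP : P ≠ d1) (hQ : Q ≠ d1) (h : P < Q) : sh d1 P < sh d1 Q := by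
  unfold sh; split_ifs <;> omega

/-- Transporting a deletable-pair witness through an erasure at an index distinct from the
pair's endpoints; the "between" condition is allowed to fail at the erased index. -/
lemma newpair {a : List (Fin n)} {d1 P Q : ℕ} {j : Fin n} {C : Fin n → Prop}
    (hP : P ≠ d1) (hQ : Q ≠ d1) (hPQ : P < Q)
    (hPv : a[P]? = some j) (hQv : a[Q]? = some j)
    (hbet : ∀ r (x : Fin n), P < r → r < Q → r ≠ d1 → a[r]? = some x → C x) :
    sh d1 P < sh d1 Q ∧ (a.eraseIdx d1)[sh d1 P]? = some j ∧
      (a.eraseIdx d1)[sh d1 Q]? = some j ∧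
      ∀ r (x : Fin n), sh d1 P < r → r < sh d1 Q → (a.eraseIdx d1)[r]? = some x → C x := by
  refine ⟨sh_lt hP hQ hPQ, by rw [getElem?_erase_sh _ hP]; exact hPv,
    by rw [getElem?_erase_sh _ hQ]; exact hQv, ?_⟩
  intro r x h1 h2 hrx
  rw [List.getElem?_eraseIdx] at hrx
  by_cases hrd : r < d1
  · rw [if_pos hrd] at hrx
    refine hbet r x ?_ ?_ (by omega) hrx <;>
      · unfold sh at h1 h2; split_ifs at h1 h2 <;> omega
  · rw [if_neg hrd] at hrx
    refine hbet (r + 1) x ?_ ?_ (by omega) hrx <;>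
      · unfold sh at h1 h2; split_ifs at h1 h2 <;> omega

lemma erase_adj {a : List (Fin n)} {p : ℕ} {j : Fin n}
    (h1 : a[p]? = some j) (h2 : a[p + 1]? = some j) :
    a.eraseIdx p = a.eraseIdx (p + 1) := by
  obtain ⟨hp, hv1⟩ := List.getElem?_eq_some_iff.mp h1
  obtain ⟨hp', hv2⟩ := List.getElem?_eq_some_iff.mp h2
  rw [List.eraseIdx_eq_take_drop_succ, List.eraseIdx_eq_take_drop_succ]
  rw [List.take_succ, List.getElem?_eq_getElem hp, hv1,
    List.drop_eq_getElem_cons hp', hv2]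
  simp

lemma erase_comm' : ∀ (l : List (Fin n)) (i j : ℕ), i ≤ j →
    (l.eraseIdx (j + 1)).eraseIdx i = (l.eraseIdx i).eraseIdx j := by
  intro l
  induction l with
  | nil => intro i j _; simp [List.eraseIdx]
  | cons a t ih =>
    intro i j hij
    cases i with
    | zero =>
      rw [List.eraseIdx_cons_succ]
      simp [List.eraseIdx]
    | succ i' =>
      cases j with
      | zero => omega
      | succ j' =>
        rw [List.eraseIdx_cons_succ, List.eraseIdx_cons_succ, List.eraseIdx_cons_succ,
          List.eraseIdx_cons_succ, ih i' j' (by omega)]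

/-- Key local-confluence lemma: a deletable position survives (suitably shifted) the deletion
of another deletable position, unless the two erasures give the same list. -/
lemma red_erase {a : List (Fin n)} {d1 d2 : ℕ} (h1 : Red a d1) (h2 : Red a d2)
    (hne : d1 ≠ d2) :
    a.eraseIdx d1 = a.eraseIdx d2 ∨ Red (a.eraseIdx d1) (sh d1 d2) := by
  obtain ⟨p2, q2, j2, hpq2, hp2, hq2, hty2⟩ := h2
  rcases hty2 with ⟨c2, rfl⟩ | ⟨c2, rfl⟩
  · -- type2 B : d2 is the second of the pair (p2, d2), all between > j2
    by_cases hd1p : d1 = p2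
    · obtain ⟨p1, q1, j1, hpq1, hp1, hq1, hty1⟩ := h1
      rcases hty1 with ⟨c1, rfl⟩ | ⟨c1, rfl⟩
      · -- type1 B : pairs (p1, d1), (d1, d2); combine to (p1, d2)
        subst hd1p
        have hjj : j1 = j2 := Option.some_inj.mp (hq1.symm.trans hp2)
        subst hjj
        right
        have key := newpair (d1 := d1) (a := a) (by omega) (Ne.symm hne)
          (hpq1.trans hpq2) hp1 hq2 (C := fun x => j1 < x) ?_
        · obtain ⟨hlt, hPv, hQv, hbet⟩ := key
          exact ⟨sh d1 p1, sh d1 d2, j1, hlt, hPv, hQv, Or.inl ⟨hbet, rfl⟩⟩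
        · intro r x hr1 hr2 hrd hrx
          rcases lt_or_gt_of_ne hrd with h' | h'
          · exact c1 r x hr1 h' hrx
          · exact c2 r x h' hr2 hrx
      · -- type1 S : pairs (d1, q1) all <, (d1, d2) all > : adjacent equal pair
        subst hd1p
        have hjj : j1 = j2 := Option.some_inj.mp (hp1.symm.trans hp2)
        subst hjj
        have hq12 : q1 = d2 := by
          by_contra hne'
          rcases lt_or_gt_of_ne hne' with h' | h'
          · exact absurd (c2 q1 j1 hpq1 h' hq1) (lt_irrefl j1)
          · exact absurd (c1 d2 j1 hpq2 h' hq2) (lt_irrefl j1)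
        subst hq12
        have hqlen : q1 < a.length := (List.getElem?_eq_some_iff.mp hq1).1
        have hadj : q1 = d1 + 1 := by
          by_contra hne'
          have hr : d1 + 1 < q1 := by omega
          have hx : a[d1 + 1]? = some (a[d1 + 1]'(by omega)) :=
            List.getElem?_eq_getElem (by omega)
          exact absurd ((c1 _ _ (by omega) hr hx).trans (c2 _ _ (by omega) hr hx))
            (lt_irrefl _)
        left
        have hq1' : a[d1 + 1]? = some j1 := by rw [← hadj]; exact hq1
        rw [hadj]
        exact erase_adj hp1 hq1'
    · right
      have key := newpair (d1 := d1) (a := a) (Ne.symm hd1p) (Ne.symm hne) hpq2 hp2 hq2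
        (C := fun x => j2 < x) (fun r x hr1 hr2 _ hrx => c2 r x hr1 hr2 hrx)
      obtain ⟨hlt, hPv, hQv, hbet⟩ := key
      exact ⟨sh d1 p2, sh d1 d2, j2, hlt, hPv, hQv, Or.inl ⟨hbet, rfl⟩⟩
  · -- type2 S : d2 is the first of the pair (d2, q2), all between < j2
    by_cases hd1q : d1 = q2
    · obtain ⟨p1, q1, j1, hpq1, hp1, hq1, hty1⟩ := h1
      rcases hty1 with ⟨c1, rfl⟩ | ⟨c1, rfl⟩
      · -- type1 B : pairs (p1, d1) all >, (d2, d1) all < : adjacent equal pair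
        subst hd1q
        have hjj : j1 = j2 := Option.some_inj.mp (hq1.symm.trans hq2)
        subst hjj
        have hp12 : d2 = p1 := by
          by_contra hne'
          rcases lt_or_gt_of_ne hne' with h' | h'
          · exact absurd (c2 p1 j1 h' hpq1 hp1) (lt_irrefl j1)
          · exact absurd (c1 d2 j1 h' hpq2 hp2) (lt_irrefl j1)
        subst hp12
        have hqlen : d1 < a.length := (List.getElem?_eq_some_iff.mp hq1).1
        have hadj : d1 = d2 + 1 := by
          by_contra hne'
          have hr : d2 + 1 < d1 := by omega
          have hx : a[d2 + 1]? = some (a[d2 + 1]'(by omega)) :=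
            List.getElem?_eq_getElem (by omega)
          exact absurd ((c2 _ _ (by omega) hr hx).trans (c1 _ _ (by omega) hr hx))
            (lt_irrefl _)
        left
        have hq1' : a[d2 + 1]? = some j1 := by rw [← hadj]; exact hq1
        rw [hadj]
        exact (erase_adj hp1 hq1').symm
      · -- type1 S : pairs (d1, q1) all <, (d2, d1) all < : combine to (d2, q1)
        subst hd1q
        have hjj : j1 = j2 := Option.some_inj.mp (hp1.symm.trans hq2)
        subst hjj
        right
        have key := newpair (d1 := d1) (a := a) (Ne.symm hne) (by omega)
          (hpq2.trans hpq1) hp2 hq1 (C := fun x => x < j1) ?_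
        · obtain ⟨hlt, hPv, hQv, hbet⟩ := key
          exact ⟨sh d1 d2, sh d1 q1, j1, hlt, hPv, hQv, Or.inr ⟨hbet, rfl⟩⟩
        · intro r x hr1 hr2 hrd hrx
          rcases lt_or_gt_of_ne hrd with h' | h'
          · exact c2 r x hr1 h' hrx
          · exact c1 r x h' hr2 hrx
    · right
      have key := newpair (d1 := d1) (a := a) (Ne.symm hne) (Ne.symm hd1q) hpq2 hp2 hq2
        (C := fun x => x < j2) (fun r x hr1 hr2 _ hrx => c2 r x hr1 hr2 hrx)
      obtain ⟨hlt, hPv, hQv, hbet⟩ := key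
      exact ⟨sh d1 d2, sh d1 q2, j2, hlt, hPv, hQv, Or.inr ⟨hbet, rfl⟩⟩

lemma erase_comm_sh {a : List (Fin n)} {d1 d2 : ℕ} (hne : d1 ≠ d2) :
    (a.eraseIdx d2).eraseIdx (sh d2 d1) = (a.eraseIdx d1).eraseIdx (sh d1 d2) := by
  rcases lt_or_gt_of_ne hne with h | h
  · obtain ⟨k, rfl⟩ : ∃ k, d2 = k + 1 := ⟨d2 - 1, by omega⟩
    have e1 : sh (k + 1) d1 = d1 := by unfold sh; rw [if_pos (by omega)]
    have e2 : sh d1 (k + 1) = k := by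
      unfold sh
      rw [if_neg (by omega)]
      omega
    rw [e1, e2, erase_comm' a d1 k (by omega)]
  · obtain ⟨k, rfl⟩ : ∃ k, d1 = k + 1 := ⟨d1 - 1, by omega⟩
    have e1 : sh (k + 1) d2 = d2 := by unfold sh; rw [if_pos (by omega)]
    have e2 : sh d2 (k + 1) = k := by
      unfold sh
      rw [if_neg (by omega)]
      omega
    rw [e1, e2, ← erase_comm' a d2 k (by omega)]

lemma del_confluent : ∀ a b c : List (Fin n), Del a b → Del a c →
    ∃ d, Relation.ReflGen Del b d ∧ Relation.ReflTransGen Del c d := by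
  rintro a b c ⟨d1, r1, rfl⟩ ⟨d2, r2, rfl⟩
  by_cases hd : d1 = d2
  · subst hd; exact ⟨_, Relation.ReflGen.refl, Relation.ReflTransGen.refl⟩
  rcases red_erase r1 r2 hd with heq | R12
  · exact ⟨a.eraseIdx d1, Relation.ReflGen.refl, heq ▸ Relation.ReflTransGen.refl⟩
  rcases red_erase r2 r1 (Ne.symm hd) with heq | R21
  · exact ⟨a.eraseIdx d1, Relation.ReflGen.refl, heq ▸ Relation.ReflTransGen.refl⟩
  refine ⟨(a.eraseIdx d1).eraseIdx (sh d1 d2),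
    Relation.ReflGen.single ⟨sh d1 d2, R12, rfl⟩,
    Relation.ReflTransGen.single ⟨sh d2 d1, R21, (erase_comm_sh hd).symm⟩⟩

lemma getElem?_append_add (u t : List (Fin n)) (k : ℕ) :
    (u ++ t)[u.length + k]? = t[k]? := by
  rw [List.getElem?_append_right (by omega)]
  congr 1
  omega

lemma eraseIdx_append_add (u t : List (Fin n)) (k : ℕ) :
    (u ++ t).eraseIdx (u.length + k) = u ++ t.eraseIdx k := by
  induction u with
  | nil => simp
  | cons a u' ih =>
    have : (a :: u').length + k = (u'.length + k) + 1 := by simp; omega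
    rw [this, List.cons_append, List.eraseIdx_cons_succ, ih, List.cons_append]

lemma kisStep_del {x y : List (Fin n)} (h : KisStep x y) : Del x y := by
  cases h with
  | idem u v i =>
    refine ⟨u.length + 1, ⟨u.length, u.length + 1, i, by omega, ?_, ?_,
      Or.inl ⟨fun r x hr1 hr2 _ => absurd hr2 (by omega), rfl⟩⟩, ?_⟩
    · have h0 := getElem?_append_add u ([i, i] ++ v) 0
      rw [List.append_assoc]
      simpa using h0
    · have h0 := getElem?_append_add u ([i, i] ++ v) 1
      rw [List.append_assoc]
      simpa using h0
    · rw [List.append_assoc u [i, i] v, eraseIdx_append_add u ([i, i] ++ v) 1]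
      simp [List.eraseIdx]
  | left u v i j hij =>
    refine ⟨u.length + 2, ⟨u.length, u.length + 2, i, by omega, ?_, ?_,
      Or.inl ⟨?_, rfl⟩⟩, ?_⟩
    · have h0 := getElem?_append_add u ([i, j, i] ++ v) 0
      rw [List.append_assoc]
      simpa using h0
    · have h0 := getElem?_append_add u ([i, j, i] ++ v) 2
      rw [List.append_assoc]
      simpa using h0
    · intro r x hr1 hr2 hrx
      have hr : r = u.length + 1 := by omega
      subst hr
      rw [List.append_assoc, getElem?_append_add u ([i, j, i] ++ v) 1] at hrx
      simp at hrx
      rw [← hrx]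
      exact hij
    · rw [List.append_assoc u [i, j, i] v, eraseIdx_append_add u ([i, j, i] ++ v) 2]
      simp [List.eraseIdx]
  | right u v i j hij =>
    refine ⟨u.length, ⟨u.length, u.length + 2, j, by omega, ?_, ?_,
      Or.inr ⟨?_, rfl⟩⟩, ?_⟩
    · have h0 := getElem?_append_add u ([j, i, j] ++ v) 0
      rw [List.append_assoc]
      simpa using h0
    · have h0 := getElem?_append_add u ([j, i, j] ++ v) 2
      rw [List.append_assoc]
      simpa using h0
    · intro r x hr1 hr2 hrx
      have hr : r = u.length + 1 := by omega
      subst hr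
      rw [List.append_assoc, getElem?_append_add u ([j, i, j] ++ v) 1] at hrx
      simp at hrx
      rw [← hrx]
      exact hij
    · have h0' : (u ++ ([j, i, j] ++ v)).eraseIdx u.length
          = u ++ ([j, i, j] ++ v).eraseIdx 0 := by
        simpa using eraseIdx_append_add u ([j, i, j] ++ v) 0
      rw [List.append_assoc u [j, i, j] v, h0']
      simp [List.eraseIdx]

lemma canonical_not_red {v : List (Fin n)} (hv : Canonical v) (d : ℕ) : ¬ Red v d := by
  rintro ⟨p, q, j, hpq, hp, hq, hty⟩
  obtain ⟨hpl, hpv⟩ := List.getElem?_eq_some_iff.mp hp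
  obtain ⟨hql, hqv⟩ := List.getElem?_eq_some_iff.mp hq
  set seg := (v.drop (p + 1)).take (q - (p + 1)) with hseg
  have hdecomp : v = v.take p ++ ([j] ++ seg ++ [j]) ++ v.drop (q + 1) := by
    conv_lhs => rw [← List.take_append_drop p v]
    rw [List.drop_eq_getElem_cons hpl, hpv]
    have h3 : v.drop (p + 1) = seg ++ v.drop q := by
      rw [hseg]
      conv_lhs => rw [← List.take_append_drop (q - (p + 1)) (v.drop (p + 1))]
      rw [List.drop_drop]
      congr 2
      omega
    rw [h3, List.drop_eq_getElem_cons hql, hqv]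
    simp
  have hspec : Special j seg := hv j seg ⟨v.take p, v.drop (q + 1), hdecomp.symm⟩
  obtain ⟨⟨xb, hxb, hjxb⟩, ⟨xs, hxs, hxsj⟩⟩ := hspec
  have getseg : ∀ x : Fin n, x ∈ seg → ∃ r, p < r ∧ r < q ∧ v[r]? = some x := by
    intro x hx
    obtain ⟨m, hm⟩ := List.mem_iff_getElem?.mp hx
    rw [hseg] at hm
    rcases Nat.lt_or_ge m (q - (p + 1)) with hmlt | hmge
    · rw [List.getElem?_take, if_pos hmlt, List.getElem?_drop] at hm
      exact ⟨p + 1 + m, by omega, by omega, hm⟩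
    · rw [List.getElem?_take, if_neg (by omega)] at hm
      exact absurd hm (by simp)
  rcases hty with ⟨c, _⟩ | ⟨c, _⟩
  · obtain ⟨r, hr1, hr2, hrx⟩ := getseg xs hxs
    exact absurd (c r xs hr1 hr2 hrx) (not_lt.mpr hxsj.le)
  · obtain ⟨r, hr1, hr2, hrx⟩ := getseg xb hxb
    exact absurd (c r xb hr1 hr2 hrx) (not_lt.mpr hjxb.le)

lemma del_sublist {a b : List (Fin n)} (h : Del a b) : b.Sublist a := by
  obtain ⟨d, _, rfl⟩ := h
  exact List.eraseIdx_sublist a d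

/-- The canonical form of a word is a quasi-subword (sublist) of it. -/
theorem stmt_3 {n : ℕ} (hn : 1 ≤ n) (v w : List (Fin n))
    (hv : Canonical v) (hvw : KisEquiv v w) :
    v.Sublist w := by
  have hD : Relation.EqvGen Del v w :=
    Relation.EqvGen.mono (fun a b h => kisStep_del h) _ _ hvw
  have hE := Relation.equivalence_join_reflTransGen (r := (Del (n := n))) (fun a b c => del_confluent a b c)
  have hJall : ∀ x y : List (Fin n), Relation.EqvGen Del x y →
      Relation.Join (Relation.ReflTransGen Del) x y := by
    intro x y h
    induction h with
    | rel a b h => exact ⟨b, Relation.ReflTransGen.single h, Relation.ReflTransGen.refl⟩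
    | refl a => exact hE.refl a
    | symm a b _ ih => exact hE.symm ih
    | trans a b c _ _ ih1 ih2 => exact hE.trans ih1 ih2
  have hJ : Relation.Join (Relation.ReflTransGen Del) v w := hJall v w hD
  obtain ⟨e, hve, hwe⟩ := hJ
  have hev : e = v := by
    rcases hve.cases_head with h | ⟨c, hc, _⟩
    · exact h.symm
    · obtain ⟨d, hr, _⟩ := hc
      exact absurd hr (canonical_not_red hv d)
  subst hev
  have hsub : ∀ {x y : List (Fin n)}, Relation.ReflTransGen Del x y → y.Sublist x := by
    intro x y h
    induction h with
    | refl => exact List.Sublist.refl _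
    | tail _ hstep ih => exact (del_sublist hstep).trans ih
  exact hsub hwe
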